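/- Let s be a complex number with Re(s) > 0 and let k > 2 be real. With p(v) = (v/π)·(2π − v·√(4−v²) − 4·arcsin(v/2)) for 0 ≤ v ≤ 2, one has ∫₀² p(v) · ₂F₁(−s/2, −s/2; 1; v²/k²) dv = ₃F₂(−s/2, −s/2, 3/2; 2, 3; 4/k²). -/

import Mathlib

open MeasureTheory Real

/-- The Pochhammer symbol `(a)_n = a (a+1) ⋯ (a+n-1)` for a complex number `a`. -/
noncomputable def cpoch (a : ℂ) (n : ℕ) : ℂ := ∏ i ∈ Finset.range n, (a + i)

/-- The Gauss hypergeometric series `₂F₁(a,b; c; z)`. -/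
noncomputable def F21 (a b c z : ℂ) : ℂ :=
  ∑' n : ℕ, (cpoch a n * cpoch b n) / cpoch c n * z ^ n / (n.factorial : ℂ)

/-- The generalized hypergeometric series `₃F₂(a₁,a₂,a₃; b₁,b₂; z)`. -/
noncomputable def F32 (a₁ a₂ a₃ b₁ b₂ z : ℂ) : ℂ :=
  ∑' n : ℕ, (cpoch a₁ n * cpoch a₂ n * cpoch a₃ n) / (cpoch b₁ n * cpoch b₂ n)
    * z ^ n / (n.factorial : ℂ)

/-- The density of `|X + Y|` for `X, Y` uniform on the unit disk, on `[0, 2]`. -/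
noncomputable def pT1 (v : ℝ) : ℝ :=
  (v / π) * (2 * π - v * Real.sqrt (4 - v ^ 2) - 4 * Real.arcsin (v / 2))

open Set intervalIntegral


lemma sqrt4_cont : Continuous fun v : ℝ => Real.sqrt (4 - v ^ 2) :=
  (continuous_const.sub (continuous_pow 2)).sqrt

lemma inv_sqrt_intable (m : ℕ) :
    IntervalIntegrable (fun v : ℝ => v ^ m / Real.sqrt (4 - v ^ 2)) volume 0 2 := by
  have hg : IntervalIntegrable (fun x : ℝ => (2 - x) ^ (-(1/2) : ℝ)) volume 0 2 := by
    have := ((intervalIntegrable_rpow' (a := 0) (b := 2)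
      (r := (-(1/2) : ℝ)) (by norm_num)).comp_sub_left 2).symm
    simpa using this
  have hg2 : IntervalIntegrable (fun x : ℝ => (4:ℝ)^m / Real.sqrt 2 * (2 - x) ^ (-(1/2) : ℝ)) volume 0 2 :=
    hg.const_mul _
  apply hg2.mono_fun
  · apply Measurable.aestronglyMeasurable
    exact (measurable_id.pow_const m).div (measurable_const.sub (measurable_id.pow_const 2)).sqrt
  · rw [Filter.EventuallyLE, ae_restrict_iff' measurableSet_uIoc]
    filter_upwards with v hv
    rw [Set.uIoc_of_le (by norm_num : (0:ℝ) ≤ 2)] at hv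
    obtain ⟨hv0, hv2⟩ := hv
    rcases eq_or_lt_of_le hv2 with h2 | h2
    · subst h2
      norm_num [Real.norm_eq_abs]
    · have h4 : 4 - v ^ 2 = (2 - v) * (2 + v) := by ring
      have hpos : (0:ℝ) < 2 - v := by linarith
      have hpos2 : (0:ℝ) < 2 + v := by linarith
      rw [Real.norm_eq_abs, Real.norm_eq_abs, abs_of_nonneg (by positivity),
        abs_of_nonneg (by positivity)]
      have hsq : Real.sqrt (4 - v^2) = Real.sqrt (2 - v) * Real.sqrt (2+v) := by
        rw [h4, Real.sqrt_mul hpos.le]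
      have hrp : (2 - v) ^ (-(1/2) : ℝ) = 1 / Real.sqrt (2 - v) := by
        rw [Real.rpow_neg hpos.le, Real.sqrt_eq_rpow, one_div]
        norm_num
      rw [hsq, hrp, mul_one_div, div_div, mul_comm (Real.sqrt 2)]
      apply div_le_div₀ (by positivity)
      · calc v ^ m ≤ 2 ^ m := pow_le_pow_left₀ hv0.le hv2 m
          _ ≤ 4 ^ m := pow_le_pow_left₀ (by norm_num) (by norm_num) m
      · positivity
      · apply mul_le_mul_of_nonneg_left _ (Real.sqrt_nonneg _)
        exact Real.sqrt_le_sqrt (by linarith)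


lemma cpoch_succ (a : ℂ) (n : ℕ) : cpoch a (n+1) = cpoch a n * (a + n) :=
  Finset.prod_range_succ _ _

lemma cpoch_one (n : ℕ) : cpoch 1 n = (n.factorial : ℂ) := by
  induction n with
  | zero => simp [cpoch]
  | succ n ih => rw [cpoch_succ, ih, Nat.factorial_succ]; push_cast; ring

lemma cpoch_two (n : ℕ) : cpoch 2 n = ((n+1).factorial : ℂ) := by
  induction n with
  | zero => simp [cpoch]
  | succ n ih =>
    have e : ((n+1+1).factorial : ℂ) = ((n:ℂ)+2) * ((n+1).factorial : ℂ) := by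
      push_cast [Nat.factorial_succ]; ring
    rw [cpoch_succ, ih, e]; ring

lemma cpoch_three (n : ℕ) : 2 * cpoch 3 n = ((n+2).factorial : ℂ) := by
  induction n with
  | zero => norm_num [cpoch]
  | succ n ih =>
    have e : ((n+1+2).factorial : ℂ) = ((n:ℂ)+3) * ((n+2).factorial : ℂ) := by
      push_cast [show n+1+2 = (n+2)+1 by ring, Nat.factorial_succ]; ring
    rw [cpoch_succ, e, ← ih]; ring

lemma cpoch_half (n : ℕ) :
    (4:ℂ)^n * (n.factorial : ℂ) * cpoch (3/2) n = ((2*n+1).factorial : ℂ) := by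
  induction n with
  | zero => simp [cpoch]
  | succ n ih =>
    have e : ((2*(n+1)+1).factorial : ℂ)
        = (2*(n:ℂ)+3) * (2*(n:ℂ)+2) * ((2*n+1).factorial : ℂ) := by
      push_cast [show 2*(n+1)+1 = ((2*n+1)+1)+1 by ring, Nat.factorial_succ]; ring
    have e2 : (((n+1).factorial : ℕ) : ℂ) = ((n:ℂ)+1) * (n.factorial : ℂ) := by
      push_cast [Nat.factorial_succ]; ring
    rw [cpoch_succ, e, ← ih, e2, pow_succ]; push_cast; ring

lemma cpoch_norm_le (a : ℂ) (n : ℕ) : ‖cpoch a n‖ ≤ ∏ i ∈ Finset.range n, (‖a‖ + i) := by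
  rw [cpoch, norm_prod]
  apply Finset.prod_le_prod (fun i _ => norm_nonneg _)
  intro i _
  calc ‖a + (i:ℂ)‖ ≤ ‖a‖ + ‖(i:ℂ)‖ := norm_add_le _ _
    _ = ‖a‖ + i := by rw [Complex.norm_natCast]

lemma summable_aux (a : ℂ) {r : ℝ} (hr0 : 0 < r) (hr1 : r < 1) :
    Summable (fun n : ℕ => (∏ i ∈ Finset.range n, (‖a‖ + i))^2 / ((n.factorial : ℝ))^2 * r^n) := by
  set b := ‖a‖ with hb
  have hb0 : 0 ≤ b := norm_nonneg a
  set t := fun n : ℕ => (∏ i ∈ Finset.range n, (b + i))^2 / ((n.factorial : ℝ))^2 * r^n with ht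
  have htpos : ∀ n, 0 ≤ t n := by
    intro n
    apply mul_nonneg (div_nonneg (by positivity) (by positivity)) (by positivity)
  apply summable_of_ratio_norm_eventually_le (r := (1+r)/2) (by linarith)
  have htend : Filter.Tendsto (fun n : ℕ => r * ((b + n)/(n+1))^2) Filter.atTop (nhds r) := by
    have h1 : Filter.Tendsto (fun n : ℕ => (b + n)/(n+1)) Filter.atTop (nhds 1) := by
      have : (fun n : ℕ => (b + n)/(n+1)) = fun n : ℕ => (b-1) * (1/(n+1)) + 1 := by
        funext n
        have : ((n:ℝ)+1) ≠ 0 := by positivity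
        field_simp
        ring
      rw [this]
      have := (tendsto_one_div_add_atTop_nhds_zero_nat.const_mul (b-1)).add_const 1
      simpa using this
    have := ((h1.mul h1).const_mul r)
    simpa [pow_two] using this
  have hev : ∀ᶠ n : ℕ in Filter.atTop, r * ((b + n)/(n+1))^2 ≤ (1+r)/2 :=
    htend.eventually_le_const (by linarith)
  filter_upwards [hev] with n hn
  rw [Real.norm_eq_abs, Real.norm_eq_abs, abs_of_nonneg (htpos _), abs_of_nonneg (htpos _)]
  have hfact : ((n+1).factorial : ℝ) = ((n:ℝ)+1) * (n.factorial : ℝ) := by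
    push_cast [Nat.factorial_succ]; ring
  have : t (n+1) = t n * (r * ((b + n)/(n+1))^2) := by
    rw [ht]
    simp only
    rw [Finset.prod_range_succ, hfact, pow_succ]
    have h1 : ((n.factorial : ℝ)) ≠ 0 := Nat.cast_ne_zero.mpr (Nat.factorial_ne_zero n)
    have h2 : ((n:ℝ)+1) ≠ 0 := by positivity
    field_simp
    ring
  rw [this, mul_comm ((1+r)/2) (t n)]
  exact mul_le_mul_of_nonneg_left hn (htpos n)


lemma hasDerivAt_sqrt4 {v : ℝ} (h1 : -2 < v) (h2 : v < 2) :
    HasDerivAt (fun v : ℝ => Real.sqrt (4 - v ^ 2)) (-v / Real.sqrt (4 - v ^ 2)) v := by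
  have h4 : (0:ℝ) < 4 - v ^ 2 := by nlinarith
  have hinner : HasDerivAt (fun v : ℝ => 4 - v ^ 2) (-(2 * v)) v := by
    simpa using (hasDerivAt_pow 2 v).const_sub 4
  have := (Real.hasDerivAt_sqrt h4.ne').comp v hinner
  refine this.congr_deriv ?_
  have hs : Real.sqrt (4 - v ^ 2) ≠ 0 := by positivity
  field_simp

lemma hasDerivAt_arcsin_half {v : ℝ} (h1 : -2 < v) (h2 : v < 2) :
    HasDerivAt (fun v : ℝ => Real.arcsin (v / 2)) (1 / Real.sqrt (4 - v ^ 2)) v := by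
  have h4 : (0:ℝ) < 4 - v ^ 2 := by nlinarith
  have hinner : HasDerivAt (fun v : ℝ => v / 2) (1 / 2) v := by
    simpa using (hasDerivAt_id v).div_const 2
  have hne1 : v / 2 ≠ -1 := by intro h; rw [div_eq_iff (by norm_num : (2:ℝ) ≠ 0)] at h; linarith
  have hne2 : v / 2 ≠ 1 := by intro h; rw [div_eq_iff (by norm_num : (2:ℝ) ≠ 0)] at h; linarith
  have := (Real.hasDerivAt_arcsin hne1 hne2).comp v hinner
  refine this.congr_deriv ?_
  have : 1 - (v/2)^2 = (4 - v^2)/4 := by ring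
  rw [this, Real.sqrt_div (by linarith) 4,
    show Real.sqrt 4 = 2 by rw [show (4:ℝ) = 2^2 by norm_num, Real.sqrt_sq (by norm_num)]]
  have hs : Real.sqrt (4 - v ^ 2) ≠ 0 := by positivity
  field_simp

lemma Cval_zero : ∫ v in (0:ℝ)..2, v ^ (2*0) / Real.sqrt (4 - v ^ 2) = π / 2 := by
  have h := integral_eq_sub_of_hasDeriv_right_of_le (f := fun v : ℝ => Real.arcsin (v/2))
    (f' := fun v : ℝ => v ^ (2*0) / Real.sqrt (4 - v ^ 2)) (by norm_num : (0:ℝ) ≤ 2)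
    (Continuous.continuousOn (by continuity))
    (fun x hx => by
      have := hasDerivAt_arcsin_half (by linarith [hx.1] : (-2:ℝ) < x) hx.2
      simpa using this.hasDerivWithinAt)
    (inv_sqrt_intable _)
  rw [h]
  norm_num [Real.arcsin_one]

lemma Cval_rec (m : ℕ) :
    (2*(m:ℝ)+2) * ∫ v in (0:ℝ)..2, v ^ (2*(m+1)) / Real.sqrt (4 - v ^ 2) =
    4*(2*(m:ℝ)+1) * ∫ v in (0:ℝ)..2, v ^ (2*m) / Real.sqrt (4 - v ^ 2) := by
  have key := integral_eq_sub_of_hasDeriv_right_of_le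
    (f := fun v : ℝ => -(v ^ (2*m+1) * Real.sqrt (4 - v ^ 2)))
    (f' := fun v : ℝ => (2*(m:ℝ)+2) * (v ^ (2*(m+1)) / Real.sqrt (4 - v ^ 2))
      - 4*(2*(m:ℝ)+1) * (v ^ (2*m) / Real.sqrt (4 - v ^ 2)))
    (by norm_num : (0:ℝ) ≤ 2)
    (Continuous.continuousOn (by continuity))
    (fun x hx => by
      have hx1 : (-2:ℝ) < x := by linarith [hx.1]
      have h4 : (0:ℝ) < 4 - x ^ 2 := by nlinarith [hx.1, hx.2]
      have hs : Real.sqrt (4 - x ^ 2) ≠ 0 := by positivity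
      have hsq : Real.sqrt (4 - x^2) * Real.sqrt (4 - x^2) = 4 - x^2 :=
        Real.mul_self_sqrt h4.le
      have hd := ((hasDerivAt_pow (2*m+1) x).mul (hasDerivAt_sqrt4 hx1 hx.2)).neg
      refine (hd.congr_deriv ?_).hasDerivWithinAt
      have hsq2 : Real.sqrt (4 - x^2) ^ 2 = 4 - x^2 := Real.sq_sqrt h4.le
      field_simp
      ring_nf
      push_cast [Nat.add_sub_cancel_left]
      linear_combination (-(1+2*(m:ℝ))*x^(m*2)) * hsq2)
    (((inv_sqrt_intable (2*(m+1))).const_mul _).sub ((inv_sqrt_intable (2*m)).const_mul _))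
  rw [intervalIntegral.integral_sub ((inv_sqrt_intable (2*(m+1))).const_mul _)
      ((inv_sqrt_intable (2*m)).const_mul _),
    intervalIntegral.integral_const_mul, intervalIntegral.integral_const_mul] at key
  norm_num at key
  linarith [key]

lemma Cval (m : ℕ) : ∫ v in (0:ℝ)..2, v ^ (2*m) / Real.sqrt (4 - v ^ 2)
    = π * (2*m).factorial / (2 * (m.factorial : ℝ)^2) := by
  induction m with
  | zero => simpa using Cval_zero
  | succ m ih =>
    have hrec := Cval_rec m
    rw [ih] at hrec
    have h1 : (2*(m:ℝ)+2) ≠ 0 := by positivity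
    field_simp at hrec ⊢
    have e1 : ((2*(m+1)).factorial : ℝ) = (2*(m:ℝ)+2) * (2*(m:ℝ)+1) * (2*m).factorial := by
      push_cast [show 2*(m+1) = (2*m+1)+1 by ring, Nat.factorial_succ]
      ring
    have e2 : ((m+1).factorial : ℝ) = ((m:ℝ)+1) * m.factorial := by
      push_cast [Nat.factorial_succ]; ring
    rw [e1, e2]
    nlinarith [hrec, Nat.factorial_pos m, Nat.factorial_pos (2*m)]

lemma Sval_zero : ∫ v in (0:ℝ)..2, v ^ (2*0) * Real.sqrt (4 - v ^ 2) = π := by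
  have h := integral_eq_sub_of_hasDeriv_right_of_le
    (f := fun v : ℝ => v * Real.sqrt (4 - v ^ 2) / 2 + 2 * Real.arcsin (v/2))
    (f' := fun v : ℝ => v ^ (2*0) * Real.sqrt (4 - v ^ 2)) (by norm_num : (0:ℝ) ≤ 2)
    (Continuous.continuousOn (by continuity))
    (fun x hx => by
      have hx1 : (-2:ℝ) < x := by linarith [hx.1]
      have h4 : (0:ℝ) < 4 - x ^ 2 := by nlinarith [hx.1, hx.2]
      have hs : Real.sqrt (4 - x ^ 2) ≠ 0 := by positivity
      have hsq2 : Real.sqrt (4 - x^2) ^ 2 = 4 - x^2 := Real.sq_sqrt h4.le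
      have hd := ((((hasDerivAt_id x).mul (hasDerivAt_sqrt4 hx1 hx.2)).div_const 2).add
        ((hasDerivAt_arcsin_half hx1 hx.2).const_mul 2))
      refine (hd.congr_deriv ?_).hasDerivWithinAt
      simp only [id_eq]
      field_simp
      linear_combination (-1) * hsq2)
    (Continuous.intervalIntegrable (by continuity) _ _)
  rw [h]
  norm_num [Real.arcsin_one]
  ring

lemma Sval_rec (m : ℕ) :
    (2*(m:ℝ)+4) * ∫ v in (0:ℝ)..2, v ^ (2*(m+1)) * Real.sqrt (4 - v ^ 2) =
    4*(2*(m:ℝ)+1) * ∫ v in (0:ℝ)..2, v ^ (2*m) * Real.sqrt (4 - v ^ 2) := by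
  have key := integral_eq_sub_of_hasDeriv_right_of_le
    (f := fun v : ℝ => v ^ (2*m+1) * (4 - v^2) * Real.sqrt (4 - v ^ 2))
    (f' := fun v : ℝ => 4*(2*(m:ℝ)+1) * (v ^ (2*m) * Real.sqrt (4 - v ^ 2))
      - (2*(m:ℝ)+4) * (v ^ (2*(m+1)) * Real.sqrt (4 - v ^ 2)))
    (by norm_num : (0:ℝ) ≤ 2)
    (Continuous.continuousOn (by continuity))
    (fun x hx => by
      have hx1 : (-2:ℝ) < x := by linarith [hx.1]
      have h4 : (0:ℝ) < 4 - x ^ 2 := by nlinarith [hx.1, hx.2]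
      have hs : Real.sqrt (4 - x ^ 2) ≠ 0 := by positivity
      have hsq2 : Real.sqrt (4 - x^2) ^ 2 = 4 - x^2 := Real.sq_sqrt h4.le
      have hpoly : HasDerivAt (fun v : ℝ => v ^ (2*m+1) * (4 - v^2))
          ((2*(m:ℝ)+1) * x ^ (2*m) * (4 - x^2) - 2 * x ^ (2*m+2)) x := by
        have := (hasDerivAt_pow (2*m+1) x).mul ((hasDerivAt_pow 2 x).const_sub 4)
        refine this.congr_deriv ?_
        push_cast
        ring
      have hd := hpoly.mul (hasDerivAt_sqrt4 hx1 hx.2)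
      refine (hd.congr_deriv ?_).hasDerivWithinAt
      field_simp
      ring_nf
      linear_combination (x^2*x^(m*2)) * hsq2)
    (Continuous.intervalIntegrable (by continuity) _ _)
  rw [intervalIntegral.integral_sub
      (Continuous.intervalIntegrable (by continuity) _ _)
      (Continuous.intervalIntegrable (by continuity) _ _),
    intervalIntegral.integral_const_mul, intervalIntegral.integral_const_mul] at key
  norm_num at key
  linarith [key]

lemma Sval (m : ℕ) : ∫ v in (0:ℝ)..2, v ^ (2*m) * Real.sqrt (4 - v ^ 2)
    = π * (2*m).factorial / ((m.factorial : ℝ) * ((m+1).factorial : ℝ)) := by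
  induction m with
  | zero => simpa using Sval_zero
  | succ m ih =>
    have hrec := Sval_rec m
    rw [ih] at hrec
    have e1 : ((2*(m+1)).factorial : ℝ) = (2*(m:ℝ)+2) * (2*(m:ℝ)+1) * (2*m).factorial := by
      push_cast [show 2*(m+1) = (2*m+1)+1 by ring, Nat.factorial_succ]
      ring
    have e2 : ((m+1).factorial : ℝ) = ((m:ℝ)+1) * m.factorial := by
      push_cast [Nat.factorial_succ]; ring
    have e3 : ((m+1+1).factorial : ℝ) = ((m:ℝ)+2) * ((m+1).factorial) := by
      push_cast [Nat.factorial_succ]; ring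
    have hI : ∫ v in (0:ℝ)..2, v ^ (2*(m+1)) * Real.sqrt (4 - v ^ 2)
        = 4*(2*(m:ℝ)+1) * (π * (2*m).factorial / ((m.factorial : ℝ) * ((m+1).factorial : ℝ)))
          / (2*(m:ℝ)+4) := by
      rw [eq_div_iff (by positivity : (2*(m:ℝ)+4) ≠ 0), mul_comm _ (2*(m:ℝ)+4)]
      exact hrec
    rw [hI, e1, e3, e2]
    have hf1 : (m.factorial : ℝ) ≠ 0 := Nat.cast_ne_zero.mpr (Nat.factorial_ne_zero m)
    field_simp
    ring

lemma arcsin_intable (n : ℕ) :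
    IntervalIntegrable (fun v : ℝ => v ^ n * Real.arcsin (v/2)) volume 0 2 := by
  apply Continuous.intervalIntegrable
  exact (continuous_pow n).mul (Real.continuous_arcsin.comp (continuous_id.div_const 2))

lemma Bval (n : ℕ) :
    (∫ v in (0:ℝ)..2, v ^ (2*n+1) * Real.arcsin (v/2))
      + (1/(2*(n:ℝ)+2)) * ∫ v in (0:ℝ)..2, v ^ (2*(n+1)) / Real.sqrt (4 - v ^ 2)
    = 2 ^ (2*n+2) / (2*(n:ℝ)+2) * (π/2) := by
  have key := integral_eq_sub_of_hasDeriv_right_of_le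
    (f := fun v : ℝ => v ^ (2*n+2) / (2*(n:ℝ)+2) * Real.arcsin (v/2))
    (f' := fun v : ℝ => v ^ (2*n+1) * Real.arcsin (v/2)
      + (1/(2*(n:ℝ)+2)) * (v ^ (2*(n+1)) / Real.sqrt (4 - v ^ 2)))
    (by norm_num : (0:ℝ) ≤ 2)
    (Continuous.continuousOn (by
      exact (((continuous_pow _).div_const _).mul
        (Real.continuous_arcsin.comp (continuous_id.div_const 2)))))
    (fun x hx => by
      have hx1 : (-2:ℝ) < x := by linarith [hx.1]
      have h4 : (0:ℝ) < 4 - x ^ 2 := by nlinarith [hx.1, hx.2]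
      have hs : Real.sqrt (4 - x ^ 2) ≠ 0 := by positivity
      have hd := ((hasDerivAt_pow (2*n+2) x).div_const (2*(n:ℝ)+2)).mul
        (hasDerivAt_arcsin_half hx1 hx.2)
      refine (hd.congr_deriv ?_).hasDerivWithinAt
      have hne : (2*(n:ℝ)+2) ≠ 0 := by positivity
      push_cast
      field_simp
      ring)
    ((arcsin_intable (2*n+1)).add ((inv_sqrt_intable (2*(n+1))).const_mul _))
  rw [intervalIntegral.integral_add (arcsin_intable (2*n+1))
      ((inv_sqrt_intable (2*(n+1))).const_mul _),
    intervalIntegral.integral_const_mul] at key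
  rw [key]
  norm_num [Real.arcsin_one]

lemma Ival (n : ℕ) : ∫ v in (0:ℝ)..2, pT1 v * v ^ (2*n)
    = 2 * (2*n+1).factorial / (((n+1).factorial : ℝ) * ((n+2).factorial : ℝ)) := by
  have hsplit : ∀ v : ℝ, pT1 v * v ^ (2*n)
      = 2 * v ^ (2*n+1) - (1/π) * (v ^ (2*(n+1)) * Real.sqrt (4 - v^2))
        - (4/π) * (v ^ (2*n+1) * Real.arcsin (v/2)) := by
    intro v
    have hpi : (π : ℝ) ≠ 0 := Real.pi_ne_zero
    unfold pT1
    field_simp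
    ring
  rw [intervalIntegral.integral_congr (g :=
    fun v => 2 * v ^ (2*n+1) - (1/π) * (v ^ (2*(n+1)) * Real.sqrt (4 - v^2))
        - (4/π) * (v ^ (2*n+1) * Real.arcsin (v/2))) (fun v _ => hsplit v)]
  have hint1 : IntervalIntegrable (fun v : ℝ => v ^ (2*n+1)) volume 0 2 :=
    (continuous_pow _).intervalIntegrable 0 2
  have hint2 : IntervalIntegrable (fun v : ℝ => v ^ (2*(n+1)) * Real.sqrt (4 - v^2)) volume 0 2 :=
    ((continuous_pow _).mul sqrt4_cont).intervalIntegrable 0 2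
  have hint3 := arcsin_intable (2*n+1)
  rw [intervalIntegral.integral_sub ((hint1.const_mul 2).sub (hint2.const_mul _)) (hint3.const_mul _),
    intervalIntegral.integral_sub (hint1.const_mul 2) (hint2.const_mul _),
    intervalIntegral.integral_const_mul, intervalIntegral.integral_const_mul,
    intervalIntegral.integral_const_mul]
  have hB : ∫ v in (0:ℝ)..2, v ^ (2*n+1) * Real.arcsin (v/2)
      = 2 ^ (2*n+2) / (2*(n:ℝ)+2) * (π/2)
        - (1/(2*(n:ℝ)+2)) * (π * (2*(n+1)).factorial / (2 * (((n+1).factorial : ℝ))^2)) := by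
    have := Bval n
    rw [Cval (n+1)] at this
    linarith [this]
  rw [hB, Sval (n+1), integral_pow]
  have hpi : (π : ℝ) ≠ 0 := Real.pi_ne_zero
  have hf1 : (((n+1).factorial : ℕ) : ℝ) ≠ 0 := Nat.cast_ne_zero.mpr (Nat.factorial_ne_zero _)
  have hf2 : (((n+2).factorial : ℕ) : ℝ) ≠ 0 := Nat.cast_ne_zero.mpr (Nat.factorial_ne_zero _)
  have e1 : ((2*(n+1)).factorial : ℝ) = (2*(n:ℝ)+2) * (2*n+1).factorial := by
    push_cast [show 2*(n+1) = (2*n+1)+1 by ring, Nat.factorial_succ]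
    ring
  have e2 : ((n+2).factorial : ℝ) = ((n:ℝ)+2) * (n+1).factorial := by
    push_cast [show n+2 = (n+1)+1 by ring, Nat.factorial_succ]
    ring
  have e3 : ((n+1+1).factorial : ℝ) = ((n:ℝ)+2) * (n+1).factorial := e2
  rw [e1, e3]
  have hne : (2*(n:ℝ)+2) ≠ 0 := by positivity
  field_simp
  push_cast
  ring

lemma pT1_cont : Continuous pT1 := by
  unfold pT1
  exact (continuous_id.div_const π).mul
    ((continuous_const.sub (continuous_id.mul sqrt4_cont)).sub
      (continuous_const.mul (Real.continuous_arcsin.comp (continuous_id.div_const 2))))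

lemma pT1_abs_le {v : ℝ} (h0 : 0 ≤ v) (h2 : v ≤ 2) : |pT1 v| ≤ 14 := by
  have hpi3 : (3:ℝ) < π := Real.pi_gt_three
  have hpi4 : π ≤ 4 := Real.pi_le_four
  have hsq : Real.sqrt (4 - v ^ 2) ≤ 2 := by
    rw [show (2:ℝ) = Real.sqrt 4 by
      rw [show (4:ℝ) = 2^2 by norm_num, Real.sqrt_sq (by norm_num)]]
    exact Real.sqrt_le_sqrt (by nlinarith)
  have hsq0 : 0 ≤ Real.sqrt (4 - v ^ 2) := Real.sqrt_nonneg _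
  have harc := Real.arcsin_mem_Icc (v/2)
  have h1 : |2 * π - v * Real.sqrt (4 - v ^ 2) - 4 * Real.arcsin (v / 2)| ≤ 20 := by
    rw [abs_le]
    constructor <;> nlinarith [harc.1, harc.2]
  unfold pT1
  rw [abs_mul]
  have h2' : |v / π| ≤ 2/3 := by
    rw [abs_of_nonneg (by positivity)]
    rw [div_le_div_iff₀ (by linarith) (by norm_num)]
    linarith
  calc |v/π| * |2 * π - v * Real.sqrt (4 - v ^ 2) - 4 * Real.arcsin (v / 2)|
      ≤ (2/3) * 20 := mul_le_mul h2' h1 (abs_nonneg _) (by norm_num)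
    _ ≤ 14 := by norm_num

theorem integral_pT1_mul_F21 (s : ℂ) (hs : 0 < s.re) (k : ℝ) (hk : 2 < k) :
    ∫ v in (0 : ℝ)..2,
        (pT1 v : ℂ) * F21 (-(s / 2)) (-(s / 2)) 1 (((v ^ 2 / k ^ 2 : ℝ)) : ℂ) =
      F32 (-(s / 2)) (-(s / 2)) (3/2) 2 3 (4 / (k : ℂ) ^ 2) := by
  set a : ℂ := -(s/2) with ha
  have hk0 : (0:ℝ) < k := by linarith
  have hkC : (k:ℂ) ≠ 0 := by
    simpa using Complex.ofReal_ne_zero.mpr (ne_of_gt hk0)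
  set r : ℝ := 4 / k^2 with hr
  have hr0 : 0 < r := by positivity
  have hr1 : r < 1 := by
    rw [hr, div_lt_one (by positivity)]
    nlinarith
  set f : ℕ → ℝ → ℂ := fun n v =>
    (pT1 v : ℂ) * ((cpoch a n * cpoch a n) / cpoch 1 n
      * (((v^2/k^2 : ℝ)):ℂ)^n / (n.factorial : ℂ)) with hf
  have h1 : ∀ v : ℝ, (pT1 v : ℂ) * F21 a a 1 ((v^2/k^2 : ℝ):ℂ) = ∑' n, f n v := by
    intro v
    rw [F21, ← tsum_mul_left]
  rw [intervalIntegral.integral_congr (g := fun v => ∑' n, f n v) (fun v _ => h1 v),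
    intervalIntegral.integral_of_le (by norm_num : (0:ℝ) ≤ 2)]
  -- bound for the interchange
  set P : ℕ → ℝ := fun n => ∏ i ∈ Finset.range n, (‖a‖ + i) with hP
  have hP0 : ∀ n, 0 ≤ P n := fun n =>
    Finset.prod_nonneg (fun i _ => by positivity)
  set bnd : ℕ → ℝ := fun n => 14 * ((P n)^2 / ((n.factorial : ℝ))^2 * r^n) with hbnd
  have hbnd0 : ∀ n, 0 ≤ bnd n := by
    intro n
    have := hP0 n
    have : (0:ℝ) ≤ (P n)^2 / ((n.factorial : ℝ))^2 * r^n := by positivity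
    simpa [hbnd] using by linarith
  have hbndsum : Summable bnd := (summable_aux a hr0 hr1).mul_left 14
  have hnormle : ∀ n : ℕ, ∀ v ∈ Ioc (0:ℝ) 2, ‖f n v‖ ≤ bnd n := by
    intro n v hv
    have hzr : |v^2/k^2| ≤ r := by
      rw [abs_of_nonneg (by positivity), hr]
      apply div_le_div_of_nonneg_right _ (by positivity)
      · nlinarith [hv.1, hv.2]
    have hfn : ‖f n v‖ = |pT1 v| * (‖cpoch a n‖ * ‖cpoch a n‖ / (n.factorial : ℝ)
        * |v^2/k^2|^n / (n.factorial : ℝ)) := by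
      rw [hf]
      simp only [norm_mul, norm_div, norm_pow, cpoch_one, Complex.norm_natCast,
        Complex.norm_real, Real.norm_eq_abs]
      rw [abs_div, abs_pow, abs_pow]
    have hbnde : bnd n = 14 * (P n * P n / (n.factorial : ℝ) * r^n / (n.factorial : ℝ)) := by
      rw [hbnd]; ring
    rw [hfn, hbnde]
    have hfp : (0:ℝ) < (n.factorial : ℝ) := by exact_mod_cast Nat.factorial_pos n
    gcongr
    · exact pT1_abs_le hv.1.le hv.2
    · exact cpoch_norm_le a n
    · exact cpoch_norm_le a n
  have hmeas : ∀ n, AEStronglyMeasurable (f n) (volume.restrict (Ioc (0:ℝ) 2)) := by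
    intro n
    apply Continuous.aestronglyMeasurable
    apply (Complex.continuous_ofReal.comp pT1_cont).mul
    apply Continuous.div_const
    apply Continuous.mul continuous_const
    exact (Complex.continuous_ofReal.comp ((continuous_pow 2).div_const _)).pow n
  have hlint : ∑' n, ∫⁻ v in Ioc (0:ℝ) 2, ‖f n v‖₊ ∂volume ≠ ⊤ := by
    have hle : ∀ n : ℕ, ∫⁻ v in Ioc (0:ℝ) 2, ‖f n v‖₊ ∂volume
        ≤ ENNReal.ofReal (bnd n) * ENNReal.ofReal 2 := by
      intro n
      calc ∫⁻ v in Ioc (0:ℝ) 2, ‖f n v‖₊ ∂volume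
          ≤ ∫⁻ _ in Ioc (0:ℝ) 2, ENNReal.ofReal (bnd n) ∂volume := by
            apply MeasureTheory.lintegral_mono_ae
            rw [ae_restrict_iff' measurableSet_Ioc]
            filter_upwards with v hv
            rw [← ENNReal.ofReal_coe_nnreal, coe_nnnorm]
            exact ENNReal.ofReal_le_ofReal (hnormle n v hv)
        _ = ENNReal.ofReal (bnd n) * volume (Ioc (0:ℝ) 2) := setLIntegral_const _ _
        _ = ENNReal.ofReal (bnd n) * ENNReal.ofReal 2 := by
            rw [Real.volume_Ioc]
            norm_num
    apply ne_top_of_le_ne_top _ (ENNReal.tsum_le_tsum hle)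
    rw [ENNReal.tsum_mul_right]
    apply ENNReal.mul_ne_top _ ENNReal.ofReal_ne_top
    rw [← ENNReal.ofReal_tsum_of_nonneg hbnd0 hbndsum]
    exact ENNReal.ofReal_ne_top
  rw [MeasureTheory.integral_tsum hmeas hlint, F32]
  apply tsum_congr
  intro n
  rw [← intervalIntegral.integral_of_le (by norm_num : (0:ℝ) ≤ 2)]
  have hterm : ∀ v : ℝ, f n v = (cpoch a n * cpoch a n / cpoch 1 n / (n.factorial : ℂ))
      * ((pT1 v * (v^2/k^2)^n : ℝ) : ℂ) := by
    intro v
    rw [hf]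
    simp only
    push_cast
    ring
  rw [intervalIntegral.integral_congr (g := fun v =>
      (cpoch a n * cpoch a n / cpoch 1 n / (n.factorial : ℂ)) * ((pT1 v * (v^2/k^2)^n : ℝ):ℂ))
      (fun v _ => hterm v),
    intervalIntegral.integral_const_mul, intervalIntegral.integral_ofReal]
  have hreal : ∫ v in (0:ℝ)..2, pT1 v * (v^2/k^2)^n
      = (1/(k^2)^n) * (2 * (2*n+1).factorial / (((n+1).factorial:ℝ) * ((n+2).factorial:ℝ))) := by
    have he : ∀ v:ℝ, pT1 v * (v^2/k^2)^n = (1/(k^2)^n) * (pT1 v * v^(2*n)) := by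
      intro v
      rw [div_pow, pow_mul]
      field_simp
    rw [intervalIntegral.integral_congr (fun v _ => he v),
      intervalIntegral.integral_const_mul, Ival n]
  rw [hreal]
  have h3 : cpoch 3 n = ((n+2).factorial : ℂ) / 2 := by
    rw [eq_div_iff (by norm_num : (2:ℂ) ≠ 0)]
    linear_combination cpoch_three n
  have h4n : ((4:ℂ)^n * (n.factorial : ℂ)) ≠ 0 := by
    have h := Nat.cast_ne_zero (R := ℂ).mpr (Nat.factorial_ne_zero n)
    exact mul_ne_zero (pow_ne_zero n (by norm_num)) h
  have h32 : cpoch (3/2) n = ((2*n+1).factorial : ℂ) / ((4:ℂ)^n * (n.factorial : ℂ)) := by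
    rw [eq_div_iff h4n]
    linear_combination cpoch_half n
  rw [cpoch_one, cpoch_two, h3, h32, div_pow]
  have hfc : ((n.factorial : ℕ):ℂ) ≠ 0 := Nat.cast_ne_zero.mpr (Nat.factorial_ne_zero n)
  have hfc1 : (((n+1).factorial : ℕ):ℂ) ≠ 0 := Nat.cast_ne_zero.mpr (Nat.factorial_ne_zero _)
  have hfc2 : (((n+2).factorial : ℕ):ℂ) ≠ 0 := Nat.cast_ne_zero.mpr (Nat.factorial_ne_zero _)
  have h4 : ((4:ℂ))^n ≠ 0 := by norm_num
  have hk2 : ((k:ℂ)^2)^n ≠ 0 := pow_ne_zero _ (pow_ne_zero _ hkC)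
  have c1 : ((n.factorial:ℕ):ℂ) ^ 2 * (((n.factorial:ℕ):ℂ))⁻¹ ^ 2 = 1 := by
    rw [← mul_pow, mul_inv_cancel₀ hfc, one_pow]
  have c2 : (k:ℂ) ^ (n*2) * ((k:ℂ))⁻¹ ^ (n*2) = 1 := by
    rw [← mul_pow, mul_inv_cancel₀ hkC, one_pow]
  have c3 : (((n+1).factorial:ℕ):ℂ) * ((((n+1).factorial:ℕ):ℂ))⁻¹ = 1 := mul_inv_cancel₀ hfc1
  have c4 : (((n+2).factorial:ℕ):ℂ) * ((((n+2).factorial:ℕ):ℂ))⁻¹ = 1 := mul_inv_cancel₀ hfc2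
  push_cast
  field_simp [hfc, hfc1, hfc2, hkC, h4]
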